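/- (Fundamental Theorem of Linear Programming) Let A ∈ ℚ^{m×n} and b ∈ ℚ^m. The system A x ≤ b is satisfiable if and only if there exists a subset I ⊆ {1,…,m} such that the submatrix A_I (consisting of the rows of A with indices in I) has linearly independent rows, |I| equals the rank of A, and there exists x ∈ ℝ^n with A x ≤ b componentwise and A_{i,−} x = b_i for every i ∈ I. -/

import Mathlib

open Submodule Set Matrix

/-- If a vector `y` is not in a subspace `U` of `ℝⁿ`, there is a vector `v` orthogonal
(w.r.t. the dot product) to all of `U` but not to `y`. -/
lemma exists_orth_aux {n : ℕ} (U : Submodule ℝ (Fin n → ℝ)) (y : Fin n → ℝ) (hy : y ∉ U) :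
    ∃ v : Fin n → ℝ, (∀ u ∈ U, u ⬝ᵥ v = 0) ∧ y ⬝ᵥ v ≠ 0 := by
  set e := WithLp.linearEquiv 2 ℝ (Fin n → ℝ)
  set U' : Submodule ℝ (EuclideanSpace ℝ (Fin n)) := U.comap (e : EuclideanSpace ℝ (Fin n) →ₗ[ℝ] Fin n → ℝ)
  have hy' : e.symm y ∉ U'ᗮᗮ := by
    rw [Submodule.orthogonal_orthogonal]
    simpa [U', Submodule.mem_comap, e, WithLp.linearEquiv_apply] using hy
  rw [Submodule.mem_orthogonal] at hy'
  push_neg at hy'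
  obtain ⟨w, hw, hwy⟩ := hy'
  refine ⟨e w, fun u hu => ?_, fun h => hwy ?_⟩
  · have := (Submodule.mem_orthogonal _ _).mp hw (e.symm u)
      (by simpa [U', Submodule.mem_comap, e, WithLp.linearEquiv_apply] using hu)
    simpa [PiLp.inner_apply, RCLike.inner_apply, dotProduct, mul_comm, e,
      WithLp.linearEquiv_apply, WithLp.linearEquiv_symm_apply, PiLp.toLp_apply,
      WithLp.coe_symm_linearEquiv] using this
  · simpa [PiLp.inner_apply, RCLike.inner_apply, dotProduct, mul_comm, e,
      WithLp.linearEquiv_apply, WithLp.linearEquiv_symm_apply, PiLp.toLp_apply,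
      WithLp.coe_symm_linearEquiv] using h

/-- From any finite family one can extract an index subset of a given finite index set
whose vectors are linearly independent and whose cardinality is the rank of the family
on that index set. -/
lemma extract_indep_aux {K M ι : Type*} [Field K] [AddCommGroup M] [Module K M]
    (v : ι → M) (t : Finset ι) :
    ∃ s : Finset ι, s ⊆ t ∧ s.card = Set.finrank K (v '' ↑t) ∧
      LinearIndependent K (fun i : {i // i ∈ s} => v i.1) := by
  classical
  obtain ⟨b, hb_sub, hb_span, hb_ind⟩ := exists_linearIndependent K (v '' ↑t)
  have hbfin : b.Finite := (t.finite_toSet.image v).subset hb_sub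
  haveI : Fintype b := hbfin.fintype
  have hchoice : ∀ x : b, ∃ i ∈ t, v i = x.1 := by
    intro x
    obtain ⟨i, hi, hvi⟩ := hb_sub x.2
    exact ⟨i, hi, hvi⟩
  choose g hg1 hg2 using hchoice
  have ginj : Function.Injective g := by
    intro a a' h
    have : (a : M) = a' := by rw [← hg2 a, ← hg2 a', h]
    exact Subtype.ext this
  refine ⟨Finset.univ.image g, ?_, ?_, ?_⟩
  · intro i hi
    obtain ⟨x, -, rfl⟩ := Finset.mem_image.mp hi
    exact hg1 x
  · rw [Finset.card_image_of_injective _ ginj, Finset.card_univ]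
    rw [Set.finrank, ← hb_span, finrank_span_set_eq_card hb_ind, Set.toFinset_card]
  · have hbij : ∀ i : {i // i ∈ Finset.univ.image g}, ∃ x : b, g x = i.1 := by
      intro i
      obtain ⟨x, -, hx⟩ := Finset.mem_image.mp i.2
      exact ⟨x, hx⟩
    choose h hh using hbij
    have hinj : Function.Injective h := by
      intro a a' hx
      apply Subtype.ext
      rw [← hh a, ← hh a', hx]
    have : (fun i : {i // i ∈ Finset.univ.image g} => v i.1) =
        (Subtype.val : b → M) ∘ h := by
      funext i
      simp only [Function.comp_apply, ← hg2 (h i), hh i]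
    rw [this]
    exact hb_ind.comp h hinj

/-- A linearly independent subfamily has cardinality at most the rank of the family. -/
lemma card_le_finrank_aux {K M ι : Type*} [Field K] [AddCommGroup M] [Module K M]
    [FiniteDimensional K M] {v : ι → M} (s : Finset ι)
    (h : LinearIndependent K (fun i : {i // i ∈ s} => v i.1)) :
    s.card ≤ Set.finrank K (Set.range v) := by
  classical
  have h1 : Module.finrank K (span K (Set.range (fun i : {i // i ∈ s} => v i.1))) =
      Fintype.card {i // i ∈ s} := (linearIndependent_iff_card_eq_finrank_span.mp h).symm
  have h2 : span K (Set.range (fun i : {i // i ∈ s} => v i.1)) ≤ span K (Set.range v) :=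
    span_mono (by rintro _ ⟨i, rfl⟩; exact ⟨i.1, rfl⟩)
  calc s.card = Fintype.card {i // i ∈ s} := (Fintype.card_coe s).symm
    _ ≤ Set.finrank K (Set.range v) := h1 ▸ Submodule.finrank_mono h2

/-- Real linear independence of rational vectors implies rational linear independence. -/
lemma li_of_cast_aux {n : ℕ} {ι : Type*} (v : ι → Fin n → ℚ)
    (h : LinearIndependent ℝ (fun i k => ((v i k : ℚ) : ℝ))) :
    LinearIndependent ℚ v := by
  have hres : LinearIndependent ℚ (fun i k => ((v i k : ℚ) : ℝ)) := by
    apply h.restrict_scalars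
    intro a b hab
    simpa using hab
  let L : (Fin n → ℚ) →ₗ[ℚ] (Fin n → ℝ) :=
    { toFun := fun q k => (q k : ℝ)
      map_add' := by intro a b; funext k; simp
      map_smul' := by intro c a; funext k; simp [Rat.smul_def] }
  exact LinearIndependent.of_comp L hres

/-- Rational linear independence of rational vectors implies real linear independence. -/
lemma li_cast_aux {n : ℕ} {ι : Type*} [Fintype ι] [DecidableEq ι] (v : ι → Fin n → ℚ)
    (h : LinearIndependent ℚ v) :
    LinearIndependent ℝ (fun i k => ((v i k : ℚ) : ℝ)) := by
  let V : Matrix (Fin n) ι ℚ := fun k i => v i k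
  have hV : Function.Injective V.mulVec := by
    rw [Matrix.mulVec_injective_iff]
    exact h
  have hker : LinearMap.ker V.mulVecLin = ⊥ := LinearMap.ker_eq_bot.mpr hV
  obtain ⟨g, hg⟩ := LinearMap.exists_leftInverse_of_injective V.mulVecLin hker
  let M : Matrix ι (Fin n) ℚ := LinearMap.toMatrix' g
  have hMV : M * V = 1 := by
    have h2 : (M * V).mulVecLin = LinearMap.id := by
      rw [Matrix.mulVecLin_mul]
      rw [show M.mulVecLin = Matrix.toLin' M from rfl, show V.mulVecLin = Matrix.toLin' V from rfl]
      rw [show M = LinearMap.toMatrix' g from rfl, Matrix.toLin'_toMatrix']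
      exact hg
    have h1 : (M * V) = LinearMap.toMatrix' (M * V).mulVecLin := by
      rw [show (M*V).mulVecLin = Matrix.toLin' (M*V) from rfl, LinearMap.toMatrix'_toLin']
    rw [h1, h2, LinearMap.toMatrix'_id]
  let f : ℚ →+* ℝ := Rat.castHom ℝ
  have hMV' : (M.map f) * (V.map f) = 1 := by
    rw [← Matrix.map_mul, hMV, Matrix.map_one f f.map_zero f.map_one]
  have hinj : Function.Injective (V.map f).mulVec := by
    intro c c' hc
    have := congrArg ((M.map f).mulVec) hc
    rwa [Matrix.mulVec_mulVec, Matrix.mulVec_mulVec, hMV', Matrix.one_mulVec,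
      Matrix.one_mulVec] at this
  have hli := Matrix.mulVec_injective_iff.mp hinj
  convert hli using 2 with i <;> rfl

/-- Rank of a rational matrix is unchanged when casting to the reals. -/
lemma rank_cast_aux {m n : ℕ} (A : Matrix (Fin m) (Fin n) ℚ) :
    (A.map ((↑) : ℚ → ℝ)).rank = A.rank := by
  classical
  set A' := A.map ((↑) : ℚ → ℝ) with hA'
  have hrQ : A.rank = Set.finrank ℚ (Set.range Aᵀ) := A.rank_eq_finrank_span_cols
  have hrR : A'.rank = Set.finrank ℝ (Set.range A'ᵀ) := A'.rank_eq_finrank_span_cols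
  apply le_antisymm
  · obtain ⟨s, -, hcard, hind⟩ :=
      extract_indep_aux (K := ℝ) (fun j => A'ᵀ j) (Finset.univ : Finset (Fin n))
    have hcard' : s.card = A'.rank := by
      rw [hcard, hrR]; congr 1; rw [Finset.coe_univ, Set.image_univ]
    have hindQ : LinearIndependent ℚ (fun j : {j // j ∈ s} => Aᵀ j.1) := by
      apply li_of_cast_aux
      convert hind using 2 with j <;> rfl
    have := card_le_finrank_aux (K := ℚ) (v := fun j => Aᵀ j) s hindQ
    rw [hcard'] at this
    rwa [← hrQ] at this
  · obtain ⟨s, -, hcard, hind⟩ :=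
      extract_indep_aux (K := ℚ) (fun j => Aᵀ j) (Finset.univ : Finset (Fin n))
    have hcard' : s.card = A.rank := by
      rw [hcard, hrQ]; congr 1; rw [Finset.coe_univ, Set.image_univ]
    have hindR : LinearIndependent ℝ (fun j : {j // j ∈ s} => A'ᵀ j.1) := by
      have := li_cast_aux (fun j : {j // j ∈ s} => Aᵀ j.1) hind
      convert this using 2 with j <;> rfl
    have := card_le_finrank_aux (K := ℝ) (v := fun j => A'ᵀ j) s hindR
    rw [hcard'] at this
    rwa [← hrR] at this

/-- Starting from any feasible point, one can climb to a feasible point whose set of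
tight rows spans the full row space. -/
lemma tight_climb_aux {m n : ℕ} (A' : Matrix (Fin m) (Fin n) ℝ) (b' : Fin m → ℝ) :
    ∀ (k : ℕ) (x : Fin n → ℝ), (∀ i, A' i ⬝ᵥ x ≤ b' i) →
      A'.rank ≤ k + Set.finrank ℝ (A' '' {i | A' i ⬝ᵥ x = b' i}) →
      ∃ y, (∀ i, A' i ⬝ᵥ y ≤ b' i) ∧
        Set.finrank ℝ (A' '' {i | A' i ⬝ᵥ y = b' i}) = A'.rank := by
  classical
  have hbound : ∀ x : Fin n → ℝ, Set.finrank ℝ (A' '' {i | A' i ⬝ᵥ x = b' i}) ≤ A'.rank := by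
    intro x
    rw [A'.rank_eq_finrank_span_row]
    exact Submodule.finrank_mono (span_mono (by rintro _ ⟨i, -, rfl⟩; exact ⟨i, rfl⟩))
  intro k
  induction k with
  | zero =>
    intro x hx h
    exact ⟨x, hx, le_antisymm (hbound x) (by simpa using h)⟩
  | succ k ih =>
    intro x hx h
    rcases le_or_gt A'.rank (k + Set.finrank ℝ (A' '' {i | A' i ⬝ᵥ x = b' i})) with h' | h'
    · exact ih x hx h'
    set U : Submodule ℝ (Fin n → ℝ) := span ℝ (A' '' {i | A' i ⬝ᵥ x = b' i}) with hU
    have hdlt : Set.finrank ℝ (A' '' {i | A' i ⬝ᵥ x = b' i}) < A'.rank := by omega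
    have hexj : ∃ j, A' j ∉ U := by
      by_contra hc
      push_neg at hc
      have : span ℝ (Set.range A') ≤ U := span_le.mpr (by rintro _ ⟨j, rfl⟩; exact hc j)
      have := Submodule.finrank_mono this
      rw [show span ℝ (Set.range A') = span ℝ (Set.range A'.row) from rfl, ← A'.rank_eq_finrank_span_row] at this
      exact absurd this (by exact Nat.not_le.mpr hdlt)
    obtain ⟨j, hj⟩ := hexj
    obtain ⟨v, hUv, hjv⟩ := exists_orth_aux U (A' j) hj
    obtain ⟨w, hUw, hjw⟩ : ∃ w, (∀ u ∈ U, u ⬝ᵥ w = 0) ∧ 0 < A' j ⬝ᵥ w := by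
      rcases hjv.lt_or_gt with hlt | hlt
      · exact ⟨-v, fun u hu => by simp [dotProduct_neg, hUv u hu],
          by simpa [dotProduct_neg] using hlt⟩
      · exact ⟨v, hUv, hlt⟩
    have hTw : ∀ i, A' i ⬝ᵥ x = b' i → A' i ⬝ᵥ w = 0 := fun i hi =>
      hUw _ (subset_span ⟨i, hi, rfl⟩)
    set S : Finset (Fin m) := Finset.univ.filter (fun i => 0 < A' i ⬝ᵥ w) with hS
    have hSne : S.Nonempty := ⟨j, by simp [hS, hjw]⟩
    set t : ℝ := S.inf' hSne (fun i => (b' i - A' i ⬝ᵥ x) / (A' i ⬝ᵥ w)) with htdef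
    have ht0 : 0 ≤ t := by
      apply Finset.le_inf'
      intro i hi
      have hiw : 0 < A' i ⬝ᵥ w := by simpa [hS] using hi
      exact div_nonneg (sub_nonneg.mpr (hx i)) hiw.le
    set y : Fin n → ℝ := x + t • w with hy
    have hdot : ∀ i, A' i ⬝ᵥ y = A' i ⬝ᵥ x + t * (A' i ⬝ᵥ w) := by
      intro i
      simp [hy, dotProduct_add, dotProduct_smul, smul_eq_mul]
    have hyfeas : ∀ i, A' i ⬝ᵥ y ≤ b' i := by
      intro i
      rw [hdot]
      rcases le_or_gt (A' i ⬝ᵥ w) 0 with h0 | h0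
      · nlinarith [hx i, mul_nonpos_of_nonneg_of_nonpos ht0 h0]
      · have hiS : i ∈ S := by simp [hS, h0]
        have := Finset.inf'_le (fun i => (b' i - A' i ⬝ᵥ x) / (A' i ⬝ᵥ w)) hiS
        rw [← htdef] at this
        have := (le_div_iff₀ h0).mp this
        linarith
    have htight : ∀ i, A' i ⬝ᵥ x = b' i → A' i ⬝ᵥ y = b' i := by
      intro i hi
      rw [hdot, hTw i hi]
      simpa using hi
    obtain ⟨i0, hi0S, hi0⟩ := Finset.exists_mem_eq_inf' hSne
      (fun i => (b' i - A' i ⬝ᵥ x) / (A' i ⬝ᵥ w))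
    have hi0w : 0 < A' i0 ⬝ᵥ w := by simpa [hS] using hi0S
    have hi0tight : A' i0 ⬝ᵥ y = b' i0 := by
      rw [hdot, ← htdef] at *
      rw [hi0, div_mul_cancel₀ _ hi0w.ne']
      ring
    have hi0notU : A' i0 ∉ U := fun hmem => by
      have := hUw _ hmem; linarith
    have hspanlt : U < span ℝ (A' '' {i | A' i ⬝ᵥ y = b' i}) := by
      refine lt_of_le_not_ge (span_mono (Set.image_mono (fun i hi => htight i hi))) ?_
      intro hle
      exact hi0notU (hle (subset_span ⟨i0, hi0tight, rfl⟩))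
    have hfr : Set.finrank ℝ (A' '' {i | A' i ⬝ᵥ x = b' i}) <
        Set.finrank ℝ (A' '' {i | A' i ⬝ᵥ y = b' i}) :=
      Submodule.finrank_lt_finrank_of_lt hspanlt
    exact ih y hyfeas (by omega)

/-- Fundamental Theorem of Linear Programming: the system `A x ≤ b` is satisfiable over
`ℝ^n` iff there is a subset `I ⊆ {1,…,m}` of rows such that the submatrix `A_I` has
linearly independent rows, `|I| = rank A`, and some `x ∈ ℝ^n` satisfies `A x ≤ b` and
the equalities `A_{i,−} x = b_i` for all `i ∈ I`. -/
theorem fundamental_theorem_of_linear_programming {m n : ℕ}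
    (A : Matrix (Fin m) (Fin n) ℚ) (b : Fin m → ℚ) :
    (∃ x : Fin n → ℝ, ∀ i, ∑ k, (A i k : ℝ) * x k ≤ (b i : ℝ)) ↔
      ∃ I : Finset (Fin m),
        LinearIndependent ℚ (fun i : {i // i ∈ I} => A i.1) ∧
        I.card = A.rank ∧
        ∃ x : Fin n → ℝ, (∀ i, ∑ k, (A i k : ℝ) * x k ≤ (b i : ℝ)) ∧
          ∀ i ∈ I, ∑ k, (A i k : ℝ) * x k = (b i : ℝ) := by
  classical
  set A' : Matrix (Fin m) (Fin n) ℝ := A.map ((↑) : ℚ → ℝ) with hA'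
  set b' : Fin m → ℝ := fun i => (b i : ℝ) with hb'
  have hdoteq : ∀ (i : Fin m) (x : Fin n → ℝ), A' i ⬝ᵥ x = ∑ k, (A i k : ℝ) * x k := by
    intro i x
    simp [dotProduct, hA', Matrix.map_apply]
  constructor
  · rintro ⟨x, hx⟩
    have hx' : ∀ i, A' i ⬝ᵥ x ≤ b' i := by
      intro i; rw [hdoteq]; exact hx i
    obtain ⟨y, hy, hyr⟩ := tight_climb_aux A' b' A'.rank x hx' (Nat.le_add_right _ _)
    set T : Finset (Fin m) := Finset.univ.filter (fun i => A' i ⬝ᵥ y = b' i) with hT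
    have hTcoe : (↑T : Set (Fin m)) = {i | A' i ⬝ᵥ y = b' i} := by
      ext i; simp [hT]
    obtain ⟨s, hsub, hcard, hind⟩ := extract_indep_aux (K := ℝ) (fun i => A' i) T
    have hscard : s.card = A.rank := by
      rw [hcard, hTcoe, hyr, rank_cast_aux]
    have hindQ : LinearIndependent ℚ (fun i : {i // i ∈ s} => A i.1) := by
      apply li_of_cast_aux
      convert hind using 2 with i <;> rfl
    refine ⟨s, hindQ, hscard, y, fun i => by rw [← hdoteq]; exact hy i, ?_⟩
    intro i hi
    have : A' i ⬝ᵥ y = b' i := by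
      have := hsub hi
      simpa [hT] using this
    rw [← hdoteq]
    exact this
  · rintro ⟨I, -, -, x, hx, -⟩
    exact ⟨x, hx⟩
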